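/- arXiv:2303.16603 — 5 statements merged into one kernel-verified Lean document; each statement's English description precedes it below -/
import Mathlib

section
/- Let n_T, n_R ≥ 1, let k, d ∈ ℝ, and let θ_1,…,θ_{n_T}, φ_1,…,φ_{n_T} ∈ ℝ. Define H_{m,j} = (1/√(n_T n_R)) · exp(i·k·m·d·sin(θ_j)·sin(φ_j)) for m = 0,…,n_R−1, set W = H† H, and for i, j ∈ {1,…,n_T} set γ_{ij} = sin(θ_j)·sin(φ_j) − sin(θ_i)·sin(φ_i). Then for all i, j, the entry w_{ij} of W satisfies w_{ij}·conj(w_{ij}) = (1/(n_R n_T)²) · ( n_R + 2 · Σ_{s=1}^{n_R−1} (n_R − s) · cos(s·k·d·γ_{ij}) ). -/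
open Matrix

lemma two_cos_helper (x : ℝ) :
    Complex.exp (Complex.I * x) + Complex.exp (-(Complex.I * x)) = 2 * (Real.cos x : ℂ) := by
  rw [Complex.ofReal_cos, Complex.cos]
  ring_nf

lemma key_sum (α : ℝ) (n : ℕ) :
    (∑ m ∈ Finset.range n, Complex.exp (Complex.I * m * α)) *
      (∑ m ∈ Finset.range n, Complex.exp (-(Complex.I * m * α))) =
    (∑ s ∈ Finset.range n, 2 * ((n : ℂ) - s) * (Real.cos (s * α) : ℂ)) - n := by
  induction n with
  | zero => simp
  | succ n ih =>
    have hrefl : (∑ m ∈ Finset.range n, 2 * Real.cos (((m : ℝ) - n) * α))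
        = ∑ m ∈ Finset.range n, 2 * Real.cos (((m : ℝ) + 1) * α) := by
      rw [← Finset.sum_range_reflect]
      apply Finset.sum_congr rfl
      intro j hj
      have hj' : j < n := Finset.mem_range.mp hj
      have hc : ((n - 1 - j : ℕ) : ℝ) = (n : ℝ) - 1 - j := by
        have h : n - 1 - j = n - (1 + j) := by omega
        rw [h, Nat.cast_sub (by omega)]
        push_cast; ring
      rw [hc, ← Real.cos_neg ((((n:ℝ)-1-j) - n) * α)]
      ring_nf
    have hcross : (∑ m ∈ Finset.range n, Complex.exp (Complex.I * m * α)) *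
          Complex.exp (-(Complex.I * n * α)) +
        Complex.exp (Complex.I * n * α) *
          (∑ m ∈ Finset.range n, Complex.exp (-(Complex.I * m * α))) =
        ∑ m ∈ Finset.range n, 2 * (Real.cos (((m : ℝ) + 1) * α) : ℂ) := by
      calc _ = ∑ m ∈ Finset.range n,
            (Complex.exp (Complex.I * m * α) * Complex.exp (-(Complex.I * n * α)) +
              Complex.exp (Complex.I * n * α) * Complex.exp (-(Complex.I * m * α))) := by
              rw [Finset.sum_mul, Finset.mul_sum, ← Finset.sum_add_distrib]
        _ = ∑ m ∈ Finset.range n, ((2 * Real.cos (((m : ℝ) - n) * α) : ℝ) : ℂ) := by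
              apply Finset.sum_congr rfl
              intro m hm
              rw [← Complex.exp_add, ← Complex.exp_add,
                show Complex.I * m * α + -(Complex.I * n * α)
                  = Complex.I * (((((m : ℝ) - n) * α : ℝ)) : ℂ) by push_cast; ring,
                show Complex.I * n * α + -(Complex.I * m * α)
                  = -(Complex.I * (((((m : ℝ) - n) * α : ℝ)) : ℂ)) by push_cast; ring,
                two_cos_helper (((m : ℝ) - n) * α)]
              push_cast; ring
        _ = ((∑ m ∈ Finset.range n, 2 * Real.cos (((m : ℝ) - n) * α) : ℝ) : ℂ) :=
              (Complex.ofReal_sum _ _).symm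
        _ = ((∑ m ∈ Finset.range n, 2 * Real.cos (((m : ℝ) + 1) * α) : ℝ) : ℂ) := by rw [hrefl]
        _ = _ := by rw [Complex.ofReal_sum]; push_cast [-Complex.ofReal_cos]; rfl
    rw [Finset.sum_range_succ, Finset.sum_range_succ, add_mul, mul_add, mul_add, ih,
      ← Complex.exp_add, show Complex.I * n * α + -(Complex.I * n * α) = 0 by ring,
      Complex.exp_zero]
    -- RHS manipulation
    have hB : (∑ s ∈ Finset.range (n+1), 2 * (((n:ℕ)+1 : ℂ) - s) * (Real.cos (s * α) : ℂ))
        = (∑ s ∈ Finset.range n, 2 * ((n : ℂ) - s) * (Real.cos (s * α) : ℂ))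
          + (∑ s ∈ Finset.range n, 2 * (Real.cos (s * α) : ℂ))
          + 2 * (Real.cos (n * α) : ℂ) := by
      rw [Finset.sum_range_succ]
      have : ∑ s ∈ Finset.range n, 2 * (((n:ℕ)+1 : ℂ) - s) * (Real.cos (s * α) : ℂ)
          = ∑ s ∈ Finset.range n, (2 * ((n : ℂ) - s) * (Real.cos (s * α) : ℂ)
            + 2 * (Real.cos (s * α) : ℂ)) := by
        apply Finset.sum_congr rfl; intro s hs; ring
      rw [this, Finset.sum_add_distrib]
      push_cast; ring
    have hC : (∑ s ∈ Finset.range n, 2 * (Real.cos (s * α) : ℂ)) + 2 * (Real.cos (n * α) : ℂ)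
        = 2 + ∑ m ∈ Finset.range n, 2 * (Real.cos (((m : ℝ) + 1) * α) : ℂ) := by
      have h1 : (∑ s ∈ Finset.range (n+1), 2 * (Real.cos (s * α) : ℂ))
          = (∑ s ∈ Finset.range n, 2 * (Real.cos (s * α) : ℂ)) + 2 * (Real.cos (n * α) : ℂ) :=
        Finset.sum_range_succ _ _
      have h2 : (∑ s ∈ Finset.range (n+1), 2 * (Real.cos (s * α) : ℂ))
          = (∑ m ∈ Finset.range n, 2 * (Real.cos (((m:ℕ)+1 : ℕ) * α) : ℂ))
            + 2 * (Real.cos ((0:ℕ) * α) : ℂ) :=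
        Finset.sum_range_succ' _ _
      have h3 : (∑ m ∈ Finset.range n, 2 * (Real.cos (((m:ℕ)+1 : ℕ) * α) : ℂ))
          = ∑ m ∈ Finset.range n, 2 * (Real.cos (((m : ℝ) + 1) * α) : ℂ) := by
        apply Finset.sum_congr rfl; intro m hm; push_cast; ring_nf
      rw [← h1, h2, h3]
      norm_num
      ring
    push_cast [-Complex.ofReal_cos] at hB ⊢
    rw [hB]
    linear_combination hcross - hC

/-- With H_{m,j} = (1/√(n_T n_R)) · exp(i·k·m·d·sin(θ_j)·sin(φ_j)), W = H† H and
γ_{ij} = sin(θ_j)·sin(φ_j) − sin(θ_i)·sin(φ_i), for all i, j the entry w_{ij} of W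
satisfies
w_{ij}·conj(w_{ij}) = (1/(n_R n_T)²)·(n_R + 2·Σ_{s=1}^{n_R−1} (n_R − s)·cos(s·k·d·γ_{ij})). -/
theorem entry_mul_conj_entry_of_satcom_W (nT nR : ℕ) (hT : 1 ≤ nT) (hR : 1 ≤ nR)
    (k d : ℝ) (θ φ : Fin nT → ℝ)
    (H : Matrix (Fin nR) (Fin nT) ℂ)
    (hH : ∀ (m : Fin nR) (j : Fin nT),
      H m j = (1 / Real.sqrt (nT * nR) : ℝ) *
        Complex.exp (Complex.I * k * (m : ℕ) * d * Real.sin (θ j) * Real.sin (φ j)))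
    (W : Matrix (Fin nT) (Fin nT) ℂ) (hW : W = Hᴴ * H)
    (γ : Fin nT → Fin nT → ℝ)
    (hγ : ∀ i j, γ i j = Real.sin (θ j) * Real.sin (φ j) - Real.sin (θ i) * Real.sin (φ i)) :
    ∀ i j : Fin nT,
      W i j * (starRingEnd ℂ) (W i j) =
        ((1 / ((nR : ℝ) * nT) ^ 2) *
          ((nR : ℝ) + 2 * ∑ s ∈ Finset.Icc 1 (nR - 1),
            ((nR : ℝ) - s) * Real.cos (s * k * d * γ i j)) : ℝ) := by
  intro i j
  set α : ℝ := k * d * γ i j with hα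
  have hnn : (0:ℝ) ≤ (nT : ℝ) * nR := by positivity
  have hc : (1 / Real.sqrt (nT * nR) : ℝ) * (1 / Real.sqrt (nT * nR) : ℝ)
      = 1 / ((nT : ℝ) * nR) := by
    rw [div_mul_div_comm, Real.mul_self_sqrt (by push_cast at hnn ⊢; exact hnn)]
    norm_num
  have hW2 : W i j = ((1 / ((nT : ℝ) * nR) : ℝ) : ℂ) *
      ∑ m ∈ Finset.range nR, Complex.exp (Complex.I * m * (α : ℂ)) := by
    rw [hW, Matrix.mul_apply, Finset.mul_sum,
      ← Fin.sum_univ_eq_sum_range (fun m : ℕ =>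
        ((1 / ((nT : ℝ) * nR) : ℝ) : ℂ) * Complex.exp (Complex.I * m * (α : ℂ)))]
    apply Finset.sum_congr rfl
    intro m _
    rw [Matrix.conjTranspose_apply, hH m i, hH m j]
    simp only [star_mul', Complex.star_def, Complex.conj_ofReal, ← Complex.exp_conj]
    have hconj : (starRingEnd ℂ)
        (Complex.I * k * (m : ℕ) * d * Real.sin (θ i) * Real.sin (φ i))
        = -(Complex.I * k * (m : ℕ) * d * Real.sin (θ i) * Real.sin (φ i)) := by
      simp [_root_.map_mul, Complex.conj_I, Complex.conj_ofReal, -Complex.ofReal_sin]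
      try ring
    rw [hconj]
    rw [show ((1 / Real.sqrt (nT * nR) : ℝ) : ℂ) *
        Complex.exp (-(Complex.I * k * (m : ℕ) * d * Real.sin (θ i) * Real.sin (φ i))) *
        ((1 / Real.sqrt (nT * nR) : ℝ) * Complex.exp (Complex.I * k * (m : ℕ) * d *
          Real.sin (θ j) * Real.sin (φ j)))
        = ((1 / Real.sqrt (nT * nR) : ℝ) * (1 / Real.sqrt (nT * nR) : ℝ) : ℝ) *
          (Complex.exp (-(Complex.I * k * (m : ℕ) * d * Real.sin (θ i) * Real.sin (φ i))) *
           Complex.exp (Complex.I * k * (m : ℕ) * d * Real.sin (θ j) * Real.sin (φ j)))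
        by push_cast; ring, hc, ← Complex.exp_add]
    congr 2
    rw [hα, hγ]
    push_cast
    ring
  have hconjW : (starRingEnd ℂ) (W i j) = ((1 / ((nT : ℝ) * nR) : ℝ) : ℂ) *
      ∑ m ∈ Finset.range nR, Complex.exp (-(Complex.I * m * (α : ℂ))) := by
    rw [hW2, _root_.map_mul, Complex.conj_ofReal, map_sum]
    congr 1
    apply Finset.sum_congr rfl
    intro m _
    rw [← Complex.exp_conj]
    congr 1
    simp [_root_.map_mul, Complex.conj_I, Complex.conj_ofReal]
    try ring
  rw [hconjW, hW2,
    show (((1 / ((nT : ℝ) * nR) : ℝ) : ℂ) *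
        ∑ m ∈ Finset.range nR, Complex.exp (Complex.I * m * (α : ℂ))) *
      (((1 / ((nT : ℝ) * nR) : ℝ) : ℂ) *
        ∑ m ∈ Finset.range nR, Complex.exp (-(Complex.I * m * (α : ℂ))))
      = ((1 / ((nT : ℝ) * nR) : ℝ) : ℂ) ^ 2 *
        ((∑ m ∈ Finset.range nR, Complex.exp (Complex.I * m * (α : ℂ))) *
         (∑ m ∈ Finset.range nR, Complex.exp (-(Complex.I * m * (α : ℂ))))) by ring,
    key_sum α nR]
  -- now pure algebra
  have hins : Finset.range nR = insert 0 (Finset.Icc 1 (nR - 1)) := by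
    ext x
    simp only [Finset.mem_range, Finset.mem_insert, Finset.mem_Icc]
    omega
  have hA : (∑ s ∈ Finset.range nR, 2 * ((nR : ℂ) - s) * (Real.cos (s * α) : ℂ))
      = 2 * nR + ∑ s ∈ Finset.Icc 1 (nR - 1), 2 * ((nR : ℂ) - s) * (Real.cos (s * α) : ℂ) := by
    rw [hins, Finset.sum_insert (by simp)]
    norm_num
  have hcosarg : ∀ s : ℕ, Real.cos ((s : ℝ) * α) = Real.cos ((s : ℝ) * k * d * γ i j) := by
    intro s; rw [hα]; ring_nf
  rw [hA]
  push_cast [-Complex.ofReal_cos]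
  have hB : (∑ s ∈ Finset.Icc 1 (nR - 1), 2 * ((nR : ℂ) - s) * (Real.cos (s * α) : ℂ))
      = ∑ s ∈ Finset.Icc 1 (nR - 1),
          2 * ((nR : ℂ) - s) * (Real.cos ((s : ℝ) * k * d * γ i j) : ℂ) := by
    apply Finset.sum_congr rfl
    intro s _
    rw [hcosarg s]
  rw [hB]
  have hD : (∑ s ∈ Finset.Icc 1 (nR - 1),
        2 * ((nR : ℂ) - s) * (Real.cos ((s : ℝ) * k * d * γ i j) : ℂ))
      = 2 * ∑ s ∈ Finset.Icc 1 (nR - 1),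
        ((nR : ℂ) - s) * (Real.cos ((s : ℝ) * k * d * γ i j) : ℂ) := by
    rw [Finset.mul_sum]
    apply Finset.sum_congr rfl
    intro s _
    ring
  rw [hD]
  ring
end

section
/- Let n_T, n_R ≥ 1, let k, d ∈ ℝ, and let θ_1,…,θ_{n_T}, φ_1,…,φ_{n_T} ∈ ℝ. Define H_{m,j} = (1/√(n_T n_R)) · exp(i·k·m·d·sin(θ_j)·sin(φ_j)) for m = 0,…,n_R−1, set W = H† H, and set γ_{ij} = sin(θ_j)·sin(φ_j) − sin(θ_i)·sin(φ_i). Then (n_R n_T)² · trace(W²) = n_R² n_T + n_R n_T (n_T − 1) + 4 · Σ_{1 ≤ j < i ≤ n_T} Σ_{s=1}^{n_R−1} (n_R − s) · cos(s·k·d·γ_{ij}). -/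
open Matrix

section Aux

open Finset

private lemma satcom_two_cos (t : ℝ) :
    Complex.exp (Complex.I * t) + Complex.exp (Complex.I * (-t)) = 2 * (Real.cos t : ℂ) := by
  rw [Complex.ofReal_cos, Complex.cos]
  ring_nf

private lemma satcom_reflect_cos (y : ℝ) (n : ℕ) :
    ∑ m ∈ Finset.range n, Real.cos (((n:ℝ) - (m:ℝ)) * y)
      = ∑ s ∈ Finset.Icc 1 n, Real.cos ((s:ℝ) * y) := by
  rw [← Finset.Ico_add_one_right_eq_Icc, Finset.sum_Ico_eq_sum_range]
  simp only [Nat.add_sub_cancel, Nat.succ_sub_one]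
  rw [← Finset.sum_range_reflect (fun m => Real.cos (((n:ℝ) - (m:ℝ)) * y)) n]
  apply Finset.sum_congr rfl
  intro j hj
  rw [Finset.mem_range] at hj
  congr 1
  have h1 : j ≤ n - 1 := Nat.le_sub_one_of_lt hj
  have h2 : 1 ≤ n := Nat.one_le_of_lt (Nat.lt_of_le_of_lt (Nat.zero_le j) hj)
  have : (↑(n - 1 - j) : ℝ) = (n:ℝ) - 1 - j := by
    push_cast [Nat.cast_sub h1, Nat.cast_sub h2]; ring
  rw [this]
  push_cast
  ring

private lemma satcom_keyC (y : ℝ) (n : ℕ) :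
    ∑ m ∈ Finset.range n, ∑ m' ∈ Finset.range n,
        Complex.exp (Complex.I * ((((m:ℝ) - (m':ℝ)) * y : ℝ) : ℂ))
      = (((n : ℝ) + 2 * ∑ s ∈ Finset.Icc 1 (n-1), ((n:ℝ) - s) * Real.cos (s * y) : ℝ) : ℂ) := by
  induction n with
  | zero => simp
  | succ n ih =>
    rw [Finset.sum_range_succ]
    have inner : ∀ m ∈ Finset.range n,
        ∑ m' ∈ Finset.range (n+1), Complex.exp (Complex.I * ((((m:ℝ) - (m':ℝ)) * y : ℝ) : ℂ))
        = (∑ m' ∈ Finset.range n, Complex.exp (Complex.I * ((((m:ℝ) - (m':ℝ)) * y : ℝ) : ℂ)))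
          + Complex.exp (Complex.I * ((((m:ℝ) - (n:ℝ)) * y : ℝ) : ℂ)) := fun m _ =>
      Finset.sum_range_succ _ n
    rw [Finset.sum_congr rfl inner, Finset.sum_add_distrib, ih, Finset.sum_range_succ]
    have hb : (∑ m ∈ Finset.range n, Complex.exp (Complex.I * ((((m:ℝ) - (n:ℝ)) * y : ℝ) : ℂ)))
        + ∑ m' ∈ Finset.range n, Complex.exp (Complex.I * ((((n:ℝ) - (m':ℝ)) * y : ℝ) : ℂ))
        = ((2 * ∑ s ∈ Finset.Icc 1 n, Real.cos ((s:ℝ) * y) : ℝ) : ℂ) := by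
      rw [← Finset.sum_add_distrib]
      have h : ∀ m ∈ Finset.range n,
          Complex.exp (Complex.I * ((((m:ℝ) - (n:ℝ)) * y : ℝ) : ℂ))
          + Complex.exp (Complex.I * ((((n:ℝ) - (m:ℝ)) * y : ℝ) : ℂ))
          = ((2 * Real.cos (((n:ℝ) - (m:ℝ)) * y) : ℝ) : ℂ) := by
        intro m _
        have h2 := satcom_two_cos (((n:ℝ) - (m:ℝ)) * y)
        push_cast at h2 ⊢
        rw [add_comm]
        convert h2 using 3
        ring
      rw [Finset.sum_congr rfl h, ← Complex.ofReal_sum]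
      exact congrArg _ (by rw [← Finset.mul_sum, satcom_reflect_cos])
    rw [add_assoc, ← add_assoc (∑ m' ∈ Finset.range n,
      Complex.exp (Complex.I * ((((m':ℝ) - (n:ℝ)) * y : ℝ) : ℂ))), hb]
    have hlast : Complex.exp (Complex.I * ((((n:ℝ) - (n:ℝ)) * y : ℝ) : ℂ)) = 1 := by
      norm_num
    rw [hlast]
    rw [← Complex.ofReal_one, ← Complex.ofReal_add, ← Complex.ofReal_add]
    congr 1
    rcases Nat.eq_zero_or_pos n with h0 | hpos
    · subst h0; simp
    · have hsplit : ∑ s ∈ Finset.Icc 1 n, ((n:ℝ)+1 - s) * Real.cos (s * y)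
          = (∑ s ∈ Finset.Icc 1 n, ((n:ℝ) - s) * Real.cos (s * y))
            + ∑ s ∈ Finset.Icc 1 n, Real.cos (s * y) := by
        rw [← Finset.sum_add_distrib]
        apply Finset.sum_congr rfl
        intro s _
        ring
      have htop : ∑ s ∈ Finset.Icc 1 n, ((n:ℝ) - s) * Real.cos (s * y)
          = ∑ s ∈ Finset.Icc 1 (n-1), ((n:ℝ) - s) * Real.cos (s * y) := by
        obtain ⟨n', rfl⟩ : ∃ n', n = n' + 1 := ⟨n - 1, (Nat.succ_pred_eq_of_pos hpos).symm⟩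
        rw [Finset.sum_Icc_succ_top (by omega)]
        simp
      push_cast
      rw [hsplit, htop]
      ring

private lemma satcom_gauss (n : ℕ) :
    ∑ s ∈ Finset.Icc 1 (n-1), ((n:ℝ) - s) = n*((n:ℝ)-1)/2 := by
  have h := satcom_keyC 0 n
  simp only [mul_zero, Complex.ofReal_zero, Complex.exp_zero, Real.cos_zero, mul_one,
    Finset.sum_const, Finset.card_range, nsmul_eq_mul] at h
  have h2 : ((n:ℝ) * n : ℝ) = ((n:ℝ) + 2 * ∑ s ∈ Finset.Icc 1 (n-1), ((n:ℝ) - s)) := by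
    exact_mod_cast h
  linarith

private lemma satcom_finsum_id (n : ℕ) : ∑ i : Fin n, (i:ℝ) = n*((n:ℝ)-1)/2 := by
  rcases Nat.eq_zero_or_pos n with h0 | hpos
  · subst h0; simp
  rw [Fin.sum_univ_eq_sum_range (fun i => (i:ℝ)) n]
  have hge := Finset.sum_range_id_mul_two n
  have hc : ((∑ i ∈ Finset.range n, i : ℕ) : ℝ) * 2 = (n:ℝ) * ((n:ℝ) - 1) := by
    rw [← Nat.cast_ofNat, ← Nat.cast_mul, hge, Nat.cast_mul, Nat.cast_sub hpos]
    norm_num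
  push_cast at hc
  linarith

private lemma satcom_card_lt {n : ℕ} (i : Fin n) :
    (Finset.univ.filter (fun j => j < i)).card = i := by
  have : Finset.univ.filter (fun j => j < i) = Finset.Iio i := by
    ext j; simp
  rw [this, Fin.card_Iio]

private lemma satcom_swap_lt_sum {n : ℕ} (F : Fin n → Fin n → ℝ) :
    ∑ i, ∑ j ∈ Finset.univ.filter (fun j => i < j), F i j
      = ∑ i, ∑ j ∈ Finset.univ.filter (fun j => j < i), F j i := by
  rw [Finset.sum_sigma', Finset.sum_sigma']
  apply Finset.sum_nbij' (fun x => ⟨x.2, x.1⟩) (fun x => ⟨x.2, x.1⟩) <;>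
    simp [Finset.mem_sigma]

private lemma satcom_sum_sym {n : ℕ} (F : Fin n → Fin n → ℝ) (hsym : ∀ i j, F i j = F j i) :
    ∑ i, ∑ j, F i j
      = (∑ i, F i i) + 2 * ∑ i, ∑ j ∈ Finset.univ.filter (fun j => j < i), F i j := by
  have hsplit : ∀ i : Fin n, ∑ j, F i j
      = (∑ j ∈ Finset.univ.filter (fun j => j < i), F i j)
        + (F i i + ∑ j ∈ Finset.univ.filter (fun j => i < j), F i j) := by
    intro i
    rw [← Finset.sum_filter_add_sum_filter_not Finset.univ (fun j => j < i)]
    congr 1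
    have : Finset.univ.filter (fun j => ¬ j < i)
        = insert i (Finset.univ.filter (fun j => i < j)) := by
      ext j
      simp [not_lt, le_iff_lt_or_eq, or_comm, eq_comm]
    rw [this, Finset.sum_insert (by simp)]
  calc ∑ i, ∑ j, F i j
      = ∑ i, ((∑ j ∈ Finset.univ.filter (fun j => j < i), F i j)
        + (F i i + ∑ j ∈ Finset.univ.filter (fun j => i < j), F i j)) :=
        Finset.sum_congr rfl (fun i _ => hsplit i)
    _ = (∑ i, F i i) + 2 * ∑ i, ∑ j ∈ Finset.univ.filter (fun j => j < i), F i j := by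
        rw [Finset.sum_add_distrib, Finset.sum_add_distrib, satcom_swap_lt_sum]
        have : ∑ i, ∑ j ∈ Finset.univ.filter (fun j => j < i), F j i
            = ∑ i, ∑ j ∈ Finset.univ.filter (fun j => j < i), F i j :=
          Finset.sum_congr rfl fun i _ => Finset.sum_congr rfl fun j _ => (hsym i j).symm
        rw [this]; ring

private lemma satcom_term (r c : ℝ) (hc : r * (c * c) = 1) (z w u : ℂ) (hu : z + w = u) :
    (r : ℂ) * (↑c * Complex.exp z * (↑c * Complex.exp w)) = Complex.exp u := by
  rw [← hu, Complex.exp_add]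
  have : (r : ℂ) * (↑c * Complex.exp z * (↑c * Complex.exp w))
      = ((r * (c * c) : ℝ) : ℂ) * (Complex.exp z * Complex.exp w) := by
    push_cast; ring
  rw [this, hc]
  simp

end Aux

/-- With H_{m,j} = (1/√(n_T n_R)) · exp(i·k·m·d·sin(θ_j)·sin(φ_j)), W = H† H and
γ_{ij} = sin(θ_j)·sin(φ_j) − sin(θ_i)·sin(φ_i), one has
(n_R n_T)² · trace(W²) = n_R² n_T + n_R n_T (n_T − 1)
  + 4 · Σ_{1 ≤ j < i ≤ n_T} Σ_{s=1}^{n_R−1} (n_R − s) · cos(s·k·d·γ_{ij}). -/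
theorem trace_sq_of_satcom_W (nT nR : ℕ) (hT : 1 ≤ nT) (hR : 1 ≤ nR)
    (k d : ℝ) (θ φ : Fin nT → ℝ)
    (H : Matrix (Fin nR) (Fin nT) ℂ)
    (hH : ∀ (m : Fin nR) (j : Fin nT),
      H m j = (1 / Real.sqrt (nT * nR) : ℝ) *
        Complex.exp (Complex.I * k * (m : ℕ) * d * Real.sin (θ j) * Real.sin (φ j)))
    (W : Matrix (Fin nT) (Fin nT) ℂ) (hW : W = Hᴴ * H)
    (γ : Fin nT → Fin nT → ℝ)
    (hγ : ∀ i j, γ i j = Real.sin (θ j) * Real.sin (φ j) - Real.sin (θ i) * Real.sin (φ i)) :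
    (((nR : ℝ) * nT) ^ 2 : ℝ) * (W ^ 2).trace =
      (((nR : ℝ) ^ 2 * nT + (nR : ℝ) * nT * ((nT : ℝ) - 1) +
        4 * ∑ i : Fin nT, ∑ j ∈ Finset.univ.filter (fun j : Fin nT => j < i),
          ∑ s ∈ Finset.Icc 1 (nR - 1), ((nR : ℝ) - s) * Real.cos (s * k * d * γ i j)) : ℝ) := by
  have hγanti : ∀ i j, γ j i = -γ i j := by intro i j; rw [hγ, hγ]; ring
  have hγdiag : ∀ i, γ i i = 0 := by intro i; rw [hγ]; ring
  have hpos : (0:ℝ) < (nT:ℝ) * nR := by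
    have h1 : (1:ℝ) ≤ nT := by exact_mod_cast hT
    have h2 : (1:ℝ) ≤ nR := by exact_mod_cast hR
    nlinarith
  have hc : ((nR:ℝ) * nT) * ((1 / Real.sqrt (nT * nR)) * (1 / Real.sqrt (nT * nR))) = 1 := by
    rw [div_mul_div_comm, one_mul, Real.mul_self_sqrt hpos.le]
    field_simp
  -- the un-normalized entries of W
  have hsum : ∀ i j : Fin nT, (((nR:ℝ) * nT : ℝ) : ℂ) * W i j
      = ∑ m ∈ Finset.range nR,
          Complex.exp (Complex.I * ((((m:ℝ)) * (k * d * γ i j) : ℝ) : ℂ)) := by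
    intro i j
    rw [hW, Matrix.mul_apply, Finset.mul_sum,
      ← Fin.sum_univ_eq_sum_range
        (fun m => Complex.exp (Complex.I * ((((m:ℝ)) * (k * d * γ i j) : ℝ) : ℂ))) nR]
    apply Finset.sum_congr rfl
    intro m _
    rw [Matrix.conjTranspose_apply, hH, hH]
    simp only [star_mul', Complex.star_def, Complex.conj_ofReal, _root_.map_mul, Complex.conj_I,
      Complex.conj_natCast, ← Complex.exp_conj]
    apply satcom_term _ _ hc
    rw [hγ]
    push_cast
    ring
  -- abbreviation for the per-pair real value
  set F : Fin nT → Fin nT → ℝ := fun i j =>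
    (nR:ℝ) + 2 * ∑ s ∈ Finset.Icc 1 (nR-1), ((nR:ℝ) - s) * Real.cos (s * k * d * γ i j) with hF
  have key2 : ∀ i j : Fin nT,
      (((((nR:ℝ) * nT) ^ 2 : ℝ)) : ℂ) * (W i j * W j i) = ((F i j : ℝ) : ℂ) := by
    intro i j
    calc ((((nR:ℝ) * nT) ^ 2 : ℝ) : ℂ) * (W i j * W j i)
        = ((((nR:ℝ) * nT : ℝ)) : ℂ) * W i j * (((((nR:ℝ) * nT : ℝ)) : ℂ) * W j i) := by
          push_cast; ring
      _ = (∑ m ∈ Finset.range nR,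
            Complex.exp (Complex.I * ((((m:ℝ)) * (k * d * γ i j) : ℝ) : ℂ)))
          * ∑ m' ∈ Finset.range nR,
            Complex.exp (Complex.I * ((((m':ℝ)) * (k * d * γ j i) : ℝ) : ℂ)) := by
          rw [hsum i j, hsum j i]
      _ = ∑ m ∈ Finset.range nR, ∑ m' ∈ Finset.range nR,
            Complex.exp (Complex.I * ((((m:ℝ) - (m':ℝ)) * (k * d * γ i j) : ℝ) : ℂ)) := by
          rw [Finset.sum_mul_sum]
          apply Finset.sum_congr rfl
          intro m _
          apply Finset.sum_congr rfl
          intro m' _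
          rw [← Complex.exp_add]
          congr 1
          rw [hγanti]
          push_cast
          ring
      _ = ((((nR : ℝ) + 2 * ∑ s ∈ Finset.Icc 1 (nR-1),
            ((nR:ℝ) - s) * Real.cos (s * (k * d * γ i j)) : ℝ)) : ℂ) :=
          satcom_keyC (k * d * γ i j) nR
      _ = ((F i j : ℝ) : ℂ) := by
          have harg : ∀ s ∈ Finset.Icc 1 (nR-1),
              ((nR:ℝ) - s) * Real.cos ((s:ℝ) * (k * d * γ i j))
              = ((nR:ℝ) - s) * Real.cos ((s:ℝ) * k * d * γ i j) := by
            intro s _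
            congr 1
            ring
          rw [Finset.sum_congr rfl harg, hF]
  -- trace as a double sum
  have htr : (W ^ 2).trace = ∑ i, ∑ j, W i j * W j i := by
    rw [pow_two]
    simp [Matrix.trace, Matrix.diag, Matrix.mul_apply]
  -- reduce to a real identity
  rw [htr, Finset.mul_sum]
  have : ∀ i : Fin nT, ((((nR:ℝ) * nT) ^ 2 : ℝ) : ℂ) * ∑ j, W i j * W j i
      = (((∑ j, F i j : ℝ)) : ℂ) := by
    intro i
    rw [Finset.mul_sum, Complex.ofReal_sum]
    exact Finset.sum_congr rfl fun j _ => key2 i j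
  rw [Finset.sum_congr rfl (fun i _ => this i), ← Complex.ofReal_sum]
  congr 1
  -- the real identity
  have hFsym : ∀ i j, F i j = F j i := by
    intro i j
    have harg : ∀ s ∈ Finset.Icc 1 (nR-1),
        ((nR:ℝ) - s) * Real.cos ((s:ℝ) * k * d * γ i j)
        = ((nR:ℝ) - s) * Real.cos ((s:ℝ) * k * d * γ j i) := by
      intro s _
      rw [show (s:ℝ) * k * d * γ j i = -((s:ℝ) * k * d * γ i j) by rw [hγanti]; ring,
        Real.cos_neg]
    simp only [hF]
    rw [Finset.sum_congr rfl harg]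
  rw [satcom_sum_sym F hFsym]
  have hdiag : ∑ i, F i i = (nT:ℝ) * ((nR:ℝ)^2) := by
    have : ∀ i : Fin nT, F i i = (nR:ℝ)^2 := by
      intro i
      rw [hF]
      simp only [hγdiag, mul_zero, Real.cos_zero, mul_one]
      rw [satcom_gauss]
      ring
    rw [Finset.sum_congr rfl (fun i _ => this i), Finset.sum_const, Finset.card_univ,
      Fintype.card_fin, nsmul_eq_mul]
  have hoff : ∑ i, ∑ j ∈ Finset.univ.filter (fun j => j < i), F i j
      = (nR:ℝ) * ((nT:ℝ) * ((nT:ℝ)-1)/2)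
        + 2 * ∑ i : Fin nT, ∑ j ∈ Finset.univ.filter (fun j : Fin nT => j < i),
            ∑ s ∈ Finset.Icc 1 (nR - 1), ((nR : ℝ) - s) * Real.cos (s * k * d * γ i j) := by
    rw [hF]
    simp only [Finset.sum_add_distrib]
    congr 1
    · have : ∀ i : Fin nT, ∑ _j ∈ Finset.univ.filter (fun j => j < i), (nR:ℝ)
          = (nR:ℝ) * (i:ℝ) := by
        intro i
        rw [Finset.sum_const, satcom_card_lt, nsmul_eq_mul]
        ring
      rw [Finset.sum_congr rfl (fun i _ => this i), ← Finset.mul_sum, satcom_finsum_id]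
    · rw [Finset.mul_sum]
      apply Finset.sum_congr rfl
      intro i _
      rw [Finset.mul_sum]
  rw [hdiag, hoff]
  ring
end

section
/- Define J₀ : ℝ → ℝ by J₀(x) = (1/(2π)) · ∫_{φ=−π}^{π} cos(x · sin(φ)) dφ. Then for every real number a, ∫_{θ=0}^{π/2} J₀(a · sin(θ)) dθ = (π/2) · ( J₀(a/2) )². -/
set_option maxHeartbeats 1000000

open Real MeasureTheory intervalIntegral Function Set

/-- Auxiliary: the unnormalized Bessel integral. -/
noncomputable def besselF (x : ℝ) : ℝ := ∫ φ in (-Real.pi)..Real.pi, Real.cos (x * Real.sin φ)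

lemma besselF_continuous : Continuous besselF := by
  apply intervalIntegral.continuous_parametric_intervalIntegral_of_continuous'
  fun_prop

lemma sin_add_sin' (x y : ℝ) :
    Real.sin x + Real.sin y = 2 * Real.sin ((x+y)/2) * Real.cos ((x-y)/2) := by
  have h1 := Real.sin_add ((x+y)/2) ((x-y)/2)
  have h2 := Real.sin_sub ((x+y)/2) ((x-y)/2)
  rw [show (x+y)/2 + (x-y)/2 = x by ring] at h1
  rw [show (x+y)/2 - (x-y)/2 = y by ring] at h2
  linarith

/-- Shift-invariance of the Bessel integral. -/
lemma besselF_shift (b s : ℝ) :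
    (∫ β in (-Real.pi)..Real.pi, Real.cos (b * Real.sin (β + s))) = besselF b := by
  have hper : Function.Periodic (fun β : ℝ => Real.cos (b * Real.sin β)) (2 * π) :=
    Real.sin_periodic.comp fun y => Real.cos (b * y)
  have h1 : (∫ β in (-π)..π, Real.cos (b * Real.sin (β + s)))
      = ∫ x in (-π + s)..(π + s), Real.cos (b * Real.sin x) :=
    intervalIntegral.integral_comp_add_right (fun x => Real.cos (b * Real.sin x)) s
  have h2 := hper.intervalIntegral_add_eq (-π + s) (-π)
  rw [show -π + s + 2*π = π + s by ring, show -π + 2*π = π by ring] at h2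
  rw [h1, h2]; rfl

/-- Fubini for iterated interval integrals of a continuous function. -/
lemma swap_integrals {f : ℝ → ℝ → ℝ} (hf : Continuous (uncurry f))
    {a b c d : ℝ} (hab : a ≤ b) (hcd : c ≤ d) :
    (∫ x in a..b, ∫ y in c..d, f x y) = ∫ y in c..d, ∫ x in a..b, f x y := by
  rw [intervalIntegral.integral_of_le hab, intervalIntegral.integral_of_le hcd]
  simp_rw [intervalIntegral.integral_of_le hab, intervalIntegral.integral_of_le hcd]
  apply MeasureTheory.integral_integral_swap
  rw [Measure.prod_restrict]
  have hcic : IsCompact ((Icc a b) ×ˢ (Icc c d)) := isCompact_Icc.prod isCompact_Icc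
  have : IntegrableOn (uncurry f) ((Icc a b) ×ˢ (Icc c d)) (volume.prod volume) :=
    hf.continuousOn.integrableOn_compact hcic
  exact this.mono_set (Set.prod_mono Set.Ioc_subset_Icc_self Set.Ioc_subset_Icc_self)

/-- Product-to-sum plus symmetry: the key pointwise-in-α identity. -/
lemma besselF_step2 (c α : ℝ) :
    (∫ β in (-π)..π, Real.cos (c * Real.sin α) * Real.cos (c * Real.sin β))
      = ∫ β in (-π)..π, Real.cos (2 * c * Real.sin ((α+β)/2) * Real.cos ((α-β)/2)) := by
  have hprod : ∀ β : ℝ, Real.cos (c * Real.sin α) * Real.cos (c * Real.sin β)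
      = (Real.cos (c * (Real.sin α - Real.sin β)) + Real.cos (c * (Real.sin α + Real.sin β))) / 2 := by
    intro β
    rw [mul_sub, mul_add, Real.cos_sub, Real.cos_add]; ring
  have hswap : (∫ β in (-π)..π, Real.cos (c * (Real.sin α - Real.sin β)))
      = ∫ β in (-π)..π, Real.cos (c * (Real.sin α + Real.sin β)) := by
    have h := intervalIntegral.integral_comp_neg
      (fun β => Real.cos (c * (Real.sin α + Real.sin β))) (a := -π) (b := π)
    simp only [Real.sin_neg, neg_neg] at h
    rw [← h]
    refine intervalIntegral.integral_congr fun β _ => ?_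
    ring_nf
  have hint1 : IntervalIntegrable (fun β => Real.cos (c * (Real.sin α - Real.sin β)))
      volume (-π) π := (by fun_prop : Continuous _).intervalIntegrable _ _
  have hint2 : IntervalIntegrable (fun β => Real.cos (c * (Real.sin α + Real.sin β)))
      volume (-π) π := (by fun_prop : Continuous _).intervalIntegrable _ _
  calc (∫ β in (-π)..π, Real.cos (c * Real.sin α) * Real.cos (c * Real.sin β))
      = ∫ β in (-π)..π, (Real.cos (c * (Real.sin α - Real.sin β))
          + Real.cos (c * (Real.sin α + Real.sin β))) / 2 := by
        exact intervalIntegral.integral_congr fun β _ => hprod β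
    _ = ((∫ β in (-π)..π, Real.cos (c * (Real.sin α - Real.sin β)))
          + ∫ β in (-π)..π, Real.cos (c * (Real.sin α + Real.sin β))) / 2 := by
        simp_rw [div_eq_mul_inv]
        rw [intervalIntegral.integral_mul_const, intervalIntegral.integral_add hint1 hint2]
    _ = ∫ β in (-π)..π, Real.cos (c * (Real.sin α + Real.sin β)) := by
        rw [hswap]; ring
    _ = ∫ β in (-π)..π, Real.cos (2 * c * Real.sin ((α+β)/2) * Real.cos ((α-β)/2)) := by
        refine intervalIntegral.integral_congr fun β _ => ?_
        rw [sin_add_sin']; ring_nf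

/-- Periodic shift plus the substitution β = 2t + α. -/
lemma besselF_step3 (c α : ℝ) :
    (∫ β in (-π)..π, Real.cos (2 * c * Real.sin ((α+β)/2) * Real.cos ((α-β)/2)))
      = 2 * ∫ t in (-(π/2))..(π/2), Real.cos (2 * c * Real.cos t * Real.sin (α + t)) := by
  set K : ℝ → ℝ := fun β => Real.cos (2 * c * Real.sin ((α+β)/2) * Real.cos ((α-β)/2)) with hK
  have hper : Function.Periodic K (2 * π) := by
    intro β
    simp only [hK]
    rw [show (α + (β + 2*π))/2 = (α+β)/2 + π by ring,
        show (α - (β + 2*π))/2 = (α-β)/2 - π by ring,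
        Real.sin_add_pi, Real.cos_sub_pi]
    ring_nf
  have h1 := hper.intervalIntegral_add_eq (-π) (α - π)
  rw [show -π + 2*π = π by ring, show α - π + 2*π = α + π by ring] at h1
  have h2 := intervalIntegral.integral_comp_mul_add K (by norm_num : (2:ℝ) ≠ 0) α
    (a := -(π/2)) (b := π/2)
  rw [show 2 * -(π/2) + α = α - π by ring, show 2 * (π/2) + α = α + π by ring] at h2
  have h2' : (∫ x in (α - π)..(α + π), K x) = 2 * ∫ t in (-(π/2))..(π/2), K (2*t + α) := by
    rw [h2, smul_eq_mul]; ring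
  rw [h1, h2']
  refine congrArg (fun z : ℝ => 2 * z) ?_
  refine intervalIntegral.integral_congr fun t _ => ?_
  simp only [hK]
  rw [show (α + (2*t + α))/2 = α + t by ring, show (α - (2*t + α))/2 = -t by ring,
      Real.cos_neg]
  ring_nf

/-- The key identity (Neumann's integral). -/
lemma besselF_key (c : ℝ) :
    besselF c ^ 2 = 4 * ∫ θ in (0:ℝ)..(π/2), besselF (2 * c * Real.sin θ) := by
  have hpi : (0:ℝ) < π := Real.pi_pos
  have step1 : besselF c ^ 2
      = ∫ α in (-π)..π, ∫ β in (-π)..π, Real.cos (c * Real.sin α) * Real.cos (c * Real.sin β) := by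
    rw [pow_two]
    conv_lhs => rw [besselF]
    rw [← intervalIntegral.integral_mul_const]
    refine intervalIntegral.integral_congr fun α _ => ?_
    rw [← intervalIntegral.integral_const_mul]
  have step5 : besselF c ^ 2 = 2 * ∫ t in (-(π/2))..(π/2), besselF (2 * c * Real.cos t) := by
    rw [step1]
    have e1 : (∫ α in (-π)..π, ∫ β in (-π)..π, Real.cos (c * Real.sin α) * Real.cos (c * Real.sin β))
        = ∫ α in (-π)..π, 2 * ∫ t in (-(π/2))..(π/2), Real.cos (2 * c * Real.cos t * Real.sin (α + t)) := by
      refine intervalIntegral.integral_congr fun α _ => ?_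
      rw [besselF_step2 c α, besselF_step3 c α]
    rw [e1, intervalIntegral.integral_const_mul]
    refine congrArg (fun z : ℝ => 2 * z) ?_
    have hc : Continuous (fun p : ℝ × ℝ => Real.cos (2 * c * Real.cos p.2 * Real.sin (p.1 + p.2))) := by
      fun_prop
    have hsw := swap_integrals (f := fun α t => Real.cos (2 * c * Real.cos t * Real.sin (α + t)))
      hc (by linarith : -π ≤ π) (by linarith : -(π/2) ≤ π/2)
    rw [hsw]
    refine intervalIntegral.integral_congr fun t _ => ?_
    exact besselF_shift (2 * c * Real.cos t) t
  have step6 : (∫ t in (-(π/2))..(π/2), besselF (2 * c * Real.cos t))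
      = ∫ θ in (0:ℝ)..π, besselF (2 * c * Real.sin θ) := by
    have h := intervalIntegral.integral_comp_sub_left
      (fun θ => besselF (2 * c * Real.sin θ)) (π/2) (a := -(π/2)) (b := π/2)
    rw [show π/2 - π/2 = (0:ℝ) by ring, show π/2 - -(π/2) = π by ring] at h
    rw [← h]
    refine intervalIntegral.integral_congr fun t _ => ?_
    rw [Real.sin_pi_div_two_sub]
  have hcont : Continuous (fun θ => besselF (2 * c * Real.sin θ)) :=
    besselF_continuous.comp (by fun_prop)
  have step7 : (∫ θ in (0:ℝ)..π, besselF (2 * c * Real.sin θ))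
      = 2 * ∫ θ in (0:ℝ)..(π/2), besselF (2 * c * Real.sin θ) := by
    have hsplit := intervalIntegral.integral_add_adjacent_intervals
      (a := (0:ℝ)) (b := π/2) (c := π)
      (hcont.intervalIntegrable (μ := volume) _ _) (hcont.intervalIntegrable (μ := volume) _ _)
    have hrefl : (∫ θ in (π/2:ℝ)..π, besselF (2 * c * Real.sin θ))
        = ∫ θ in (0:ℝ)..(π/2), besselF (2 * c * Real.sin θ) := by
      have h := intervalIntegral.integral_comp_sub_left
        (fun θ => besselF (2 * c * Real.sin θ)) π (a := (0:ℝ)) (b := π/2)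
      rw [show π - π/2 = π/2 by ring, show π - 0 = π by ring] at h
      rw [← h]
      refine intervalIntegral.integral_congr fun t _ => ?_
      rw [Real.sin_pi_sub]
    rw [← hsplit, hrefl]; ring
  rw [step5, step6, step7]; ring

/-- The Bessel function of the first kind of order zero, via its integral
representation J₀(x) = (1/(2π)) ∫_{−π}^{π} cos(x sinφ) dφ. -/
noncomputable def besselJ0 (x : ℝ) : ℝ :=
  (1 / (2 * Real.pi)) * ∫ φ in (-Real.pi)..Real.pi, Real.cos (x * Real.sin φ)

lemma besselJ0_eq (x : ℝ) : besselJ0 x = (1 / (2 * Real.pi)) * besselF x := rfl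

/-- For every real number a, ∫_{θ=0}^{π/2} J₀(a · sin(θ)) dθ = (π/2) · (J₀(a/2))². -/
theorem integral_besselJ0_sin (a : ℝ) :
    (∫ θ in (0 : ℝ)..(Real.pi / 2), besselJ0 (a * Real.sin θ)) =
      (Real.pi / 2) * (besselJ0 (a / 2)) ^ 2 := by
  simp_rw [besselJ0_eq]
  rw [intervalIntegral.integral_const_mul]
  have hkey := besselF_key (a / 2)
  have h2 : ∀ θ : ℝ, 2 * (a/2) * Real.sin θ = a * Real.sin θ := fun θ => by ring
  simp_rw [h2] at hkey
  have hpi : (π:ℝ) ≠ 0 := Real.pi_ne_zero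
  rw [show (∫ θ in (0:ℝ)..(π/2), besselF (a * Real.sin θ)) = besselF (a/2)^2 / 4 by linarith]
  field_simp
  ring
end

section
/- Define J₀ : ℝ → ℝ by J₀(x) = (1/(2π)) · ∫_{φ=−π}^{π} cos(x · sin(φ)) dφ. Then for every real number a, ∫_{μ=0}^{1} J₀(a·μ) / √(1 − μ²) dμ = (π/2) · ( J₀(a/2) )². -/
open Real MeasureTheory Set intervalIntegral Function

lemma besselJ0_continuous : Continuous besselJ0 := by
  apply Continuous.mul continuous_const
  exact intervalIntegral.continuous_parametric_intervalIntegral_of_continuous'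
    (f := fun x t => Real.cos (x * Real.sin t)) (by fun_prop) _ _

lemma besselJ0_int (x : ℝ) :
    (∫ φ in (-Real.pi)..Real.pi, Real.cos (x * Real.sin φ)) = 2 * π * besselJ0 x := by
  rw [besselJ0]
  field_simp

-- ∫ cos(x cos t) over a period equals the sin version
lemma cos_cos_int (x : ℝ) :
    (∫ t in (-Real.pi)..Real.pi, Real.cos (x * Real.cos t)) = 2 * π * besselJ0 x := by
  have hper : Function.Periodic (fun t => Real.cos (x * Real.sin t)) (2 * π) := by
    intro t; simp [Real.sin_add_two_pi]
  have h1 : (∫ t in (-Real.pi)..Real.pi, Real.cos (x * Real.cos t))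
      = ∫ t in (-Real.pi)..Real.pi, Real.cos (x * Real.sin (t + π/2)) := by
    congr 1; ext t; rw [Real.sin_add_pi_div_two]
  rw [h1, intervalIntegral.integral_comp_add_right (fun t => Real.cos (x * Real.sin t)) (π/2)]
  rw [← besselJ0_int x]
  have := hper.intervalIntegral_add_eq (-π + π/2) (-π)
  rw [show -π + π/2 + 2*π = π + π/2 by ring, show -π + 2*π = π by ring] at this
  exact this

lemma sin_cos_int (x : ℝ) :
    (∫ t in (-Real.pi)..Real.pi, Real.sin (x * Real.cos t)) = 0 := by
  have hc : Continuous fun t => Real.sin (x * Real.cos t) := by fun_prop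
  have hsplit := intervalIntegral.integral_add_adjacent_intervals
    (μ := volume) (a := -π) (b := 0) (c := π) (f := fun t => Real.sin (x * Real.cos t))
    (hc.intervalIntegrable _ _) (hc.intervalIntegrable _ _)
  have hneg : (∫ t in (-Real.pi)..(0:ℝ), Real.sin (x * Real.cos t))
      = - ∫ t in (0:ℝ)..Real.pi, Real.sin (x * Real.cos t) := by
    have := intervalIntegral.integral_comp_add_right
      (a := 0) (b := π) (fun t => Real.sin (x * Real.cos t)) (-π)
    rw [show (0:ℝ) + -π = -π by ring, show π + -π = 0 by ring] at this
    rw [← this, ← intervalIntegral.integral_neg]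
    congr 1; ext t
    rw [show t + -π = t - π by ring, Real.cos_sub_pi]
    simp
  linarith [hsplit, hneg]


lemma per_shift (g : ℝ → ℝ) (hper : Function.Periodic g (2*π)) (t : ℝ) :
    (∫ u in t..(t + 2*π), g u) = ∫ u in (-π)..π, g u := by
  have := hper.intervalIntegral_add_eq t (-π)
  rwa [show -π + 2*π = π by ring] at this

lemma two_period (g : ℝ → ℝ) (hg : Continuous g) (hper : Function.Periodic g (2*π)) (ψ : ℝ) :
    (∫ θ in (-π)..π, g (2*θ + ψ)) = ∫ t in (-π)..π, g t := by
  rw [intervalIntegral.integral_comp_mul_add g two_ne_zero ψ]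
  have hsplit := intervalIntegral.integral_add_adjacent_intervals
    (μ := volume) (a := 2*(-π)+ψ) (b := ψ) (c := 2*π+ψ) (f := g)
    (hg.intervalIntegrable _ _) (hg.intervalIntegrable _ _)
  have e1 : (∫ u in (2*(-π)+ψ)..ψ, g u) = ∫ u in (-π)..π, g u := by
    have := per_shift g hper (2*(-π)+ψ)
    rwa [show 2*(-π)+ψ + 2*π = ψ by ring] at this
  have e2 : (∫ u in ψ..(2*π+ψ), g u) = ∫ u in (-π)..π, g u := by
    have := per_shift g hper ψ
    rwa [show ψ + 2*π = 2*π+ψ by ring] at this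
  rw [← hsplit, e1, e2]
  simp; ring

lemma key (a : ℝ) :
    (∫ θ in (-π)..π, besselJ0 (a * Real.sin θ)) = 2 * π * (besselJ0 (a/2))^2 := by
  set C : ℝ → ℝ := fun t => Real.cos (a/2 * Real.cos t) with hCdef
  set S : ℝ → ℝ := fun t => Real.sin (a/2 * Real.cos t) with hSdef
  have hCc : Continuous C := by fun_prop
  have hSc : Continuous S := by fun_prop
  have hCper : Function.Periodic C (2*π) := fun t => by simp [hCdef, Real.cos_add_two_pi]
  have hSper : Function.Periodic S (2*π) := fun t => by simp [hSdef, Real.cos_add_two_pi]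
  -- the trig identity
  have trig : ∀ θ φ : ℝ, Real.cos (a * Real.sin θ * Real.sin φ)
      = C (θ-φ) * C (θ+φ) + S (θ-φ) * S (θ+φ) := by
    intro θ φ
    have h1 : a * Real.sin θ * Real.sin φ
        = a/2 * Real.cos (θ-φ) - a/2 * Real.cos (θ+φ) := by
      rw [Real.cos_sub, Real.cos_add]; ring
    rw [h1, Real.cos_sub (a/2 * Real.cos (θ-φ)) (a/2 * Real.cos (θ+φ))]
  -- inner integral, rewritten via shift
  have inner_eq : ∀ θ : ℝ, (∫ φ in (-π)..π, Real.cos (a * Real.sin θ * Real.sin φ))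
      = ∫ ψ in (-π)..π, (C ψ * C (2*θ+ψ) + S ψ * S (2*θ+ψ)) := by
    intro θ
    set G : ℝ → ℝ := fun φ => C (θ-φ) * C (θ+φ) + S (θ-φ) * S (θ+φ) with hGdef
    have hGper : Function.Periodic G (2*π) := by
      intro φ
      simp only [hGdef]
      rw [show θ - (φ + 2*π) = (θ - φ) + 2*(-π) by ring, show θ + (φ + 2*π) = (θ+φ) + 2*π by ring]
      have c1 : C ((θ-φ) + 2*(-π)) = C (θ-φ) := by
        simp only [hCdef]
        rw [show (θ-φ) + 2*(-π) = (θ-φ) - 2*π by ring, Real.cos_sub_two_pi]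
      have s1 : S ((θ-φ) + 2*(-π)) = S (θ-φ) := by
        simp only [hSdef]
        rw [show (θ-φ) + 2*(-π) = (θ-φ) - 2*π by ring, Real.cos_sub_two_pi]
      rw [c1, s1, hCper (θ+φ), hSper (θ+φ)]
    have h1 : (∫ φ in (-π)..π, Real.cos (a * Real.sin θ * Real.sin φ))
        = ∫ φ in (-π)..π, G φ := by
      congr 1; ext φ; exact trig θ φ
    have h2 : (∫ ψ in (-π)..π, G (ψ + θ)) = ∫ φ in (-π)..π, G φ := by
      rw [intervalIntegral.integral_comp_add_right G θ]
      have := per_shift G hGper (-π + θ)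
      rw [show -π + θ + 2*π = π + θ by ring] at this
      exact this
    rw [h1, ← h2]
    apply intervalIntegral.integral_congr
    intro ψ _
    simp only [hGdef]
    rw [show θ - (ψ + θ) = -ψ by ring, show θ + (ψ + θ) = 2*θ + ψ by ring]
    simp only [hCdef, hSdef, Real.cos_neg]
  -- double integral two ways
  set F : ℝ → ℝ → ℝ := fun θ ψ => C ψ * C (2*θ+ψ) + S ψ * S (2*θ+ψ) with hFdef
  have h2lin : Continuous fun p : ℝ × ℝ => 2*p.1 + p.2 := by fun_prop
  have hFc : Continuous (Function.uncurry F) := by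
    simp only [hFdef, Function.uncurry]
    exact ((hCc.comp continuous_snd).mul (hCc.comp h2lin)).add
      ((hSc.comp continuous_snd).mul (hSc.comp h2lin))
  have hle : (-π) ≤ π := by linarith [Real.pi_pos]
  have hint : Integrable (Function.uncurry F)
      ((volume.restrict (Ioc (-π) π)).prod (volume.restrict (Ioc (-π) π))) := by
    rw [Measure.prod_restrict, ← Measure.volume_eq_prod]
    exact (hFc.continuousOn.integrableOn_compact (isCompact_Icc.prod isCompact_Icc)).mono_set
      (Set.prod_mono Ioc_subset_Icc_self Ioc_subset_Icc_self)
  have hswap : (∫ θ in (-π)..π, ∫ ψ in (-π)..π, F θ ψ)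
      = ∫ ψ in (-π)..π, ∫ θ in (-π)..π, F θ ψ := by
    rw [intervalIntegral.integral_of_le hle, intervalIntegral.integral_of_le hle]
    simp_rw [intervalIntegral.integral_of_le hle]
    exact MeasureTheory.integral_integral_swap hint
  -- Way A : T = 2π ∫ J₀(a sin θ)
  have hTA : (∫ θ in (-π)..π, ∫ φ in (-π)..π, Real.cos (a * Real.sin θ * Real.sin φ))
      = 2 * π * ∫ θ in (-π)..π, besselJ0 (a * Real.sin θ) := by
    rw [← intervalIntegral.integral_const_mul]
    apply intervalIntegral.integral_congr
    intro θ _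
    exact besselJ0_int (a * Real.sin θ)
  -- Way B
  have hTB : (∫ θ in (-π)..π, ∫ φ in (-π)..π, Real.cos (a * Real.sin θ * Real.sin φ))
      = (2 * π * besselJ0 (a/2))^2 := by
    have step1 : (∫ θ in (-π)..π, ∫ φ in (-π)..π, Real.cos (a * Real.sin θ * Real.sin φ))
        = ∫ θ in (-π)..π, ∫ ψ in (-π)..π, F θ ψ := by
      apply intervalIntegral.integral_congr
      intro θ _
      exact inner_eq θ
    have step2 : ∀ ψ : ℝ, (∫ θ in (-π)..π, F θ ψ)
        = (2 * π * besselJ0 (a/2)) * C ψ := by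
      intro ψ
      have i1 : IntervalIntegrable (fun θ => C ψ * C (2*θ+ψ)) volume (-π) π :=
        ((continuous_const.mul (hCc.comp (by fun_prop))).intervalIntegrable _ _)
      have i2 : IntervalIntegrable (fun θ => S ψ * S (2*θ+ψ)) volume (-π) π :=
        ((continuous_const.mul (hSc.comp (by fun_prop))).intervalIntegrable _ _)
      simp only [hFdef]
      rw [intervalIntegral.integral_add i1 i2, intervalIntegral.integral_const_mul,
        intervalIntegral.integral_const_mul, two_period C hCc hCper ψ, two_period S hSc hSper ψ,
        cos_cos_int (a/2), sin_cos_int (a/2)]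
      ring
    have step3 : (∫ ψ in (-π)..π, ∫ θ in (-π)..π, F θ ψ)
        = (2 * π * besselJ0 (a/2)) * ∫ ψ in (-π)..π, C ψ := by
      rw [← intervalIntegral.integral_const_mul]
      apply intervalIntegral.integral_congr
      intro ψ _
      exact step2 ψ
    rw [step1, hswap, step3, cos_cos_int (a/2)]
    ring
  have hπ : (2:ℝ) * π ≠ 0 := by positivity
  have heq := hTA.symm.trans hTB
  rw [show (2*π*besselJ0 (a/2))^2 = (2*π) * (2*π*(besselJ0 (a/2))^2) by ring] at heq
  exact mul_left_cancel₀ hπ heq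

lemma besselJ0_neg (x : ℝ) : besselJ0 (-x) = besselJ0 x := by
  have : (fun φ => Real.cos (-x * Real.sin φ)) = fun φ => Real.cos (x * Real.sin φ) := by
    ext φ; rw [neg_mul, Real.cos_neg]
  rw [besselJ0, besselJ0, this]

lemma quarter (a : ℝ) :
    (∫ θ in (0:ℝ)..(π/2), besselJ0 (a * Real.sin θ)) = (π/2) * (besselJ0 (a/2))^2 := by
  set h : ℝ → ℝ := fun θ => besselJ0 (a * Real.sin θ) with hhdef
  have hc : Continuous h := besselJ0_continuous.comp (by fun_prop)
  have heven : ∀ θ, h (-θ) = h θ := by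
    intro θ; simp only [hhdef, Real.sin_neg, mul_neg, besselJ0_neg]
  have hrefl : ∀ θ, h (π - θ) = h θ := by
    intro θ; simp only [hhdef, Real.sin_pi_sub]
  have e1 : (∫ θ in (-π)..(0:ℝ), h θ) = ∫ θ in (0:ℝ)..π, h θ := by
    have := intervalIntegral.integral_comp_neg (a := (0:ℝ)) (b := π) h
    rw [neg_zero] at this
    rw [← this]
    apply intervalIntegral.integral_congr
    intro θ _; exact heven θ
  have e2 : (∫ θ in (π/2)..π, h θ) = ∫ θ in (0:ℝ)..(π/2), h θ := by
    have := intervalIntegral.integral_comp_sub_left (a := (0:ℝ)) (b := π/2) h π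
    rw [sub_zero, show π - π/2 = π/2 by ring] at this
    rw [← this]
    apply intervalIntegral.integral_congr
    intro θ _; exact hrefl θ
  have s1 := intervalIntegral.integral_add_adjacent_intervals (μ := volume)
    (a := -π) (b := 0) (c := π) (f := h) (hc.intervalIntegrable _ _) (hc.intervalIntegrable _ _)
  have s2 := intervalIntegral.integral_add_adjacent_intervals (μ := volume)
    (a := 0) (b := π/2) (c := π) (f := h) (hc.intervalIntegrable _ _) (hc.intervalIntegrable _ _)
  have hk := key a
  have : (4:ℝ) * ∫ θ in (0:ℝ)..(π/2), h θ = 2 * π * (besselJ0 (a/2))^2 := by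
    rw [← hk, ← s1, e1, ← s2, e2]; ring
  linarith [this]

lemma subst (a : ℝ) :
    (∫ μ in Set.Ioo (0 : ℝ) 1, besselJ0 (a * μ) / Real.sqrt (1 - μ ^ 2))
      = ∫ θ in (0:ℝ)..(π/2), besselJ0 (a * Real.sin θ) := by
  have himg : Real.sin '' Ioo 0 (π/2) = Ioo (0:ℝ) 1 := by
    ext y
    constructor
    · rintro ⟨θ, ⟨h0, h1⟩, rfl⟩
      refine ⟨Real.sin_pos_of_pos_of_lt_pi h0 (by linarith [Real.pi_pos]), ?_⟩
      have hlt := Real.strictMonoOn_sin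
        (a := θ) (b := π/2)
        ⟨by linarith [Real.pi_pos], by linarith [Real.pi_pos]⟩
        ⟨by linarith [Real.pi_pos], le_refl _⟩ h1
      rwa [Real.sin_pi_div_two] at hlt
    · rintro ⟨hy0, hy1⟩
      have hmem : Real.arcsin y ∈ Ioo (0:ℝ) (π/2) :=
        ⟨Real.arcsin_pos.mpr hy0, Real.arcsin_lt_pi_div_two.mpr hy1⟩
      exact ⟨Real.arcsin y, hmem, Real.sin_arcsin (by linarith) (by linarith)⟩
  have hderiv : ∀ θ ∈ Ioo (0:ℝ) (π/2),
      HasDerivWithinAt Real.sin (Real.cos θ) (Ioo (0:ℝ) (π/2)) θ :=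
    fun θ _ => (Real.hasDerivAt_sin θ).hasDerivWithinAt
  have hsub : Ioo (0:ℝ) (π/2) ⊆ Icc (-(π/2)) (π/2) := by
    intro x hx
    rw [Set.mem_Icc]
    constructor
    · linarith [hx.1, Real.pi_pos]
    · exact le_of_lt hx.2
  have hinj : InjOn Real.sin (Ioo (0:ℝ) (π/2)) := Real.injOn_sin.mono hsub
  rw [← himg, integral_image_eq_integral_abs_deriv_smul measurableSet_Ioo hderiv hinj]
  rw [show (∫ θ in (0:ℝ)..(π/2), besselJ0 (a * Real.sin θ))
      = ∫ θ in Ioo (0:ℝ) (π/2), besselJ0 (a * Real.sin θ) by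
    rw [intervalIntegral.integral_of_le (by linarith [Real.pi_pos]),
      MeasureTheory.integral_Ioc_eq_integral_Ioo]]
  apply setIntegral_congr_fun measurableSet_Ioo
  intro θ hθ
  have hcos : 0 < Real.cos θ :=
    Real.cos_pos_of_mem_Ioo ⟨by linarith [hθ.1, Real.pi_pos], hθ.2⟩
  have hsq : Real.sqrt (1 - Real.sin θ ^ 2) = Real.cos θ := by
    rw [show 1 - Real.sin θ^2 = Real.cos θ^2 by
      rw [← Real.sin_sq_add_cos_sq θ]; ring, Real.sqrt_sq hcos.le]
  simp only [hsq, abs_of_pos hcos, smul_eq_mul]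
  field_simp

/-- For every real number a,
∫_{μ=0}^{1} J₀(a·μ) / √(1 − μ²) dμ = (π/2) · (J₀(a/2))², the integral being the
Lebesgue integral over (0,1). -/
theorem integral_besselJ0_div_sqrt (a : ℝ) :
    (∫ μ in Set.Ioo (0 : ℝ) 1, besselJ0 (a * μ) / Real.sqrt (1 - μ ^ 2)) =
      (Real.pi / 2) * (besselJ0 (a / 2)) ^ 2 := by
  rw [subst a, quarter a]
end

section
/- Define J₀ : ℝ → ℝ by J₀(x) = (1/(2π)) · ∫_{φ=−π}^{π} cos(x · sin(φ)) dφ. Then for every real number a, (1/(π/2 · 2π))² · ∫_{θ_j=0}^{π/2} ∫_{φ_j=−π}^{π} ∫_{θ_i=0}^{π/2} ∫_{φ_i=−π}^{π} cos( a·( sin(θ_j) sin(φ_j) − sin(θ_i) sin(φ_i) ) ) dφ_i dθ_i dφ_j dθ_j = ( J₀(a/2) )⁴. -/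
set_option linter.unnecessarySimpa false


open Real MeasureTheory intervalIntegral Set Function

-- Fubini swap for interval integrals of bounded continuous functions
lemma my_swap {g : ℝ → ℝ → ℝ} (hg : Continuous (Function.uncurry g))
    (hbd : ∀ x y, |g x y| ≤ 1)
    {a b c d : ℝ} (hab : a ≤ b) (hcd : c ≤ d) :
    ∫ x in a..b, ∫ y in c..d, g x y = ∫ y in c..d, ∫ x in a..b, g x y := by
  rw [intervalIntegral.integral_of_le hab, intervalIntegral.integral_of_le hcd]
  simp_rw [intervalIntegral.integral_of_le hcd, intervalIntegral.integral_of_le hab]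
  apply MeasureTheory.integral_integral_swap
  refine Integrable.mono' (integrable_const 1) hg.aestronglyMeasurable ?_
  exact Filter.Eventually.of_forall fun p => hbd p.1 p.2

lemma my_odd {f : ℝ → ℝ} (hf : Continuous f) (hodd : ∀ x, f (-x) = -f x) (b : ℝ) :
    ∫ x in (-b)..b, f x = 0 := by
  have h1 : ∫ x in (0:ℝ)..b, f (-x) = ∫ x in (-b)..(0:ℝ), f x := by
    simpa using intervalIntegral.integral_comp_neg f (a := 0) (b := b)
  simp_rw [hodd, intervalIntegral.integral_neg] at h1
  rw [← intervalIntegral.integral_add_adjacent_intervals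
    (hf.intervalIntegrable (-b) 0) (hf.intervalIntegrable 0 b), ← h1]
  ring

lemma my_even {f : ℝ → ℝ} (hf : Continuous f) (hev : ∀ x, f (-x) = f x) (b : ℝ) :
    ∫ x in (-b)..b, f x = 2 * ∫ x in (0:ℝ)..b, f x := by
  have h1 : ∫ x in (0:ℝ)..b, f (-x) = ∫ x in (-b)..(0:ℝ), f x := by
    simpa using intervalIntegral.integral_comp_neg f (a := 0) (b := b)
  simp_rw [hev] at h1
  rw [← intervalIntegral.integral_add_adjacent_intervals
    (hf.intervalIntegrable (-b) 0) (hf.intervalIntegrable 0 b), ← h1]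
  ring

lemma sin_int_zero (c : ℝ) : ∫ φ in (-π)..π, Real.sin (c * Real.sin φ) = 0 := by
  apply my_odd (by fun_prop)
  intro x; simp

lemma key_id (u β : ℝ) : Real.sin (2*u - β) + Real.sin β = 2 * Real.sin u * Real.cos (u - β) := by
  rw [Real.sin_sub, Real.cos_sub, Real.sin_two_mul, Real.cos_two_mul']
  linear_combination (-Real.sin β) * (Real.sin_sq_add_cos_sq u)

lemma my_cont (z : ℝ) : Continuous (Function.uncurry (fun α u : ℝ =>
    Real.cos (2*z*Real.sin u*Real.cos (u - α)))) := by fun_prop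

lemma sub2 (c : ℝ) : ∫ x in (-π)..π, Real.cos (c * Real.cos x)
    = ∫ φ in (-π)..π, Real.cos (c * Real.sin φ) := by
  have h1 := intervalIntegral.integral_comp_add_right (a := -π) (b := π)
    (fun y => Real.cos (c * Real.sin y)) (π/2)
  simp_rw [Real.sin_add_pi_div_two] at h1
  rw [h1]
  have hper : Function.Periodic (fun y => Real.cos (c * Real.sin y)) (2*π) := by
    intro y; simp [Real.sin_add_two_pi]
  have h2 := hper.intervalIntegral_add_eq (-π + π/2) (-π)
  rw [show -π + π/2 + 2*π = π + π/2 by ring, show -π + 2*π = π by ring] at h2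
  exact h2

lemma sub1 (z α : ℝ) : (∫ β in (-π)..π, Real.cos (z*Real.sin α + z*Real.sin β))
    = 2 * ∫ u in (-(π/2))..(π/2), Real.cos (2*z*Real.sin u*Real.cos (u - α)) := by
  have h1 := intervalIntegral.integral_comp_mul_sub (a := (α-π)/2) (b := (α+π)/2)
    (fun β => Real.cos (z*Real.sin α + z*Real.sin β)) (two_ne_zero) α
  rw [show 2*((α-π)/2) - α = -π by ring, show 2*((α+π)/2) - α = π by ring] at h1
  have h2 : ∀ u : ℝ, Real.cos (z*Real.sin α + z*Real.sin (2*u - α))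
      = Real.cos (2*z*Real.sin u*Real.cos (u - α)) := by
    intro u
    congr 1
    linear_combination z * key_id u α
  simp_rw [h2] at h1
  have hper : Function.Periodic (fun u => Real.cos (2*z*Real.sin u*Real.cos (u - α))) π := by
    intro u
    simp only
    rw [Real.sin_add_pi, show u + π - α = (u - α) + π by ring, Real.cos_add_pi]
    congr 1; ring
  have h3 := hper.intervalIntegral_add_eq ((α-π)/2) (-(π/2))
  rw [show (α-π)/2 + π = (α+π)/2 by ring, show -(π/2) + π = π/2 by ring] at h3
  rw [h3, smul_eq_mul] at h1
  linarith

lemma sub3 (z u : ℝ) : (∫ α in (-π)..π, Real.cos (2*z*Real.sin u*Real.cos (u - α)))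
    = ∫ φ in (-π)..π, Real.cos (2*z*Real.sin u*Real.sin φ) := by
  have h1 := intervalIntegral.integral_comp_sub_left (a := -π) (b := π)
    (fun x => Real.cos (2*z*Real.sin u*Real.cos x)) u
  rw [show u - -π = u + π by ring] at h1
  have hper : Function.Periodic (fun x => Real.cos (2*z*Real.sin u*Real.cos x)) (2*π) := by
    intro x; simp [Real.cos_add_two_pi]
  have h2 := hper.intervalIntegral_add_eq (u - π) (-π)
  rw [show u - π + 2*π = u + π by ring, show -π + 2*π = π by ring] at h2
  rw [h1, h2]
  exact sub2 (2*z*Real.sin u)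

lemma neumann (z : ℝ) :
    (∫ φ in (-π)..π, Real.cos (z * Real.sin φ))^2
      = 4 * ∫ θ in (0:ℝ)..(π/2), ∫ φ in (-π)..π, Real.cos (2*z*Real.sin θ*Real.sin φ) := by
  have hpi := Real.pi_pos
  have hple : (-π : ℝ) ≤ π := by linarith
  have hple2 : (-(π/2) : ℝ) ≤ π/2 := by linarith
  have prodid : ∀ α β : ℝ, Real.cos (z*Real.sin α) * Real.cos (z*Real.sin β)
      = (Real.cos (z*Real.sin α - z*Real.sin β) + Real.cos (z*Real.sin α + z*Real.sin β))/2 := by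
    intro α β; rw [Real.cos_sub, Real.cos_add]; ring
  have hneg : ∀ α : ℝ, (∫ β in (-π)..π, Real.cos (z*Real.sin α - z*Real.sin β))
      = ∫ β in (-π)..π, Real.cos (z*Real.sin α + z*Real.sin β) := by
    intro α
    have h := intervalIntegral.integral_comp_neg (a := -π) (b := π)
      (fun β => Real.cos (z*Real.sin α + z*Real.sin β))
    simp only [Real.sin_neg, neg_neg, mul_neg, ← sub_eq_add_neg] at h
    rw [← h]
  have e2 : ∀ α : ℝ, (∫ β in (-π)..π, Real.cos (z*Real.sin α) * Real.cos (z*Real.sin β))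
      = ∫ β in (-π)..π, Real.cos (z*Real.sin α + z*Real.sin β) := by
    intro α
    simp_rw [prodid α]
    rw [intervalIntegral.integral_div,
      intervalIntegral.integral_add
        ((by fun_prop : Continuous fun β => Real.cos (z*Real.sin α - z*Real.sin β)).intervalIntegrable _ _)
        ((by fun_prop : Continuous fun β => Real.cos (z*Real.sin α + z*Real.sin β)).intervalIntegrable _ _),
      hneg α]
    ring
  calc (∫ φ in (-π)..π, Real.cos (z * Real.sin φ))^2
      = ∫ α in (-π)..π, ∫ β in (-π)..π, Real.cos (z*Real.sin α) * Real.cos (z*Real.sin β) := by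
        rw [sq, ← intervalIntegral.integral_mul_const]
        simp_rw [intervalIntegral.integral_const_mul]
    _ = ∫ α in (-π)..π, ∫ β in (-π)..π, Real.cos (z*Real.sin α + z*Real.sin β) :=
        intervalIntegral.integral_congr (fun α _ => e2 α)
    _ = ∫ α in (-π)..π, 2 * ∫ u in (-(π/2))..(π/2), Real.cos (2*z*Real.sin u*Real.cos (u - α)) :=
        intervalIntegral.integral_congr (fun α _ => sub1 z α)
    _ = 2 * ∫ α in (-π)..π, ∫ u in (-(π/2))..(π/2), Real.cos (2*z*Real.sin u*Real.cos (u - α)) :=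
        intervalIntegral.integral_const_mul _ _
    _ = 2 * ∫ u in (-(π/2))..(π/2), ∫ α in (-π)..π, Real.cos (2*z*Real.sin u*Real.cos (u - α)) := by
        rw [my_swap (my_cont z) (fun α u => Real.abs_cos_le_one _) hple hple2]
    _ = 2 * ∫ u in (-(π/2))..(π/2), ∫ φ in (-π)..π, Real.cos (2*z*Real.sin u*Real.sin φ) := by
        rw [intervalIntegral.integral_congr (fun u _ => sub3 z u)]
    _ = 2 * ∫ φ in (-π)..π, ∫ u in (-(π/2))..(π/2), Real.cos (2*z*Real.sin u*Real.sin φ) := by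
        rw [my_swap (g := fun u φ => Real.cos (2*z*Real.sin u*Real.sin φ)) (by fun_prop)
          (fun u φ => Real.abs_cos_le_one _) hple2 hple]
    _ = 2 * ∫ φ in (-π)..π, 2 * ∫ u in (0:ℝ)..(π/2), Real.cos (2*z*Real.sin u*Real.sin φ) := by
        refine congrArg _ (intervalIntegral.integral_congr (fun φ _ => ?_))
        apply my_even (by fun_prop)
        intro u
        rw [Real.sin_neg, show 2*z*(-Real.sin u)*Real.sin φ = -(2*z*Real.sin u*Real.sin φ) by ring,
          Real.cos_neg]
    _ = 4 * ∫ φ in (-π)..π, ∫ u in (0:ℝ)..(π/2), Real.cos (2*z*Real.sin u*Real.sin φ) := by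
        rw [intervalIntegral.integral_const_mul]; ring
    _ = 4 * ∫ θ in (0:ℝ)..(π/2), ∫ φ in (-π)..π, Real.cos (2*z*Real.sin θ*Real.sin φ) := by
        rw [my_swap (g := fun φ θ => Real.cos (2*z*Real.sin θ*Real.sin φ)) (by fun_prop)
          (fun φ θ => Real.abs_cos_le_one _) hple (by linarith)]

lemma inner_two (a X : ℝ) :
    (∫ θ in (0:ℝ)..(π/2), ∫ φ in (-π)..π, Real.cos (a * (X - Real.sin θ * Real.sin φ)))
    = Real.cos (a*X) * ∫ θ in (0:ℝ)..(π/2), ∫ φ in (-π)..π, Real.cos (a*Real.sin θ*Real.sin φ) := by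
  have hpoint : ∀ θ φ : ℝ, Real.cos (a * (X - Real.sin θ * Real.sin φ))
      = Real.cos (a*X) * Real.cos (a*Real.sin θ*Real.sin φ)
        + Real.sin (a*X) * Real.sin (a*Real.sin θ*Real.sin φ) := by
    intro θ φ
    rw [show a * (X - Real.sin θ * Real.sin φ) = a*X - a*Real.sin θ*Real.sin φ by ring,
      Real.cos_sub]
  simp_rw [hpoint]
  have hstep : ∀ θ : ℝ, (∫ φ in (-π)..π,
      (Real.cos (a*X) * Real.cos (a*Real.sin θ*Real.sin φ)
        + Real.sin (a*X) * Real.sin (a*Real.sin θ*Real.sin φ)))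
      = Real.cos (a*X) * ∫ φ in (-π)..π, Real.cos (a*Real.sin θ*Real.sin φ) := by
    intro θ
    rw [intervalIntegral.integral_add
        ((by fun_prop : Continuous fun φ => Real.cos (a*X) * Real.cos (a*Real.sin θ*Real.sin φ)).intervalIntegrable _ _)
        ((by fun_prop : Continuous fun φ => Real.sin (a*X) * Real.sin (a*Real.sin θ*Real.sin φ)).intervalIntegrable _ _),
      intervalIntegral.integral_const_mul, intervalIntegral.integral_const_mul,
      sin_int_zero (a*Real.sin θ)]
    ring
  rw [intervalIntegral.integral_congr (fun θ _ => hstep θ), intervalIntegral.integral_const_mul]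

theorem fourfold_integral_cos_eq_besselJ0_pow_four' (a : ℝ) :
    (1 / (Real.pi / 2 * (2 * Real.pi))) ^ 2 *
      (∫ θj in (0 : ℝ)..(Real.pi / 2), ∫ φj in (-Real.pi)..Real.pi,
        ∫ θi in (0 : ℝ)..(Real.pi / 2), ∫ φi in (-Real.pi)..Real.pi,
          Real.cos (a * (Real.sin θj * Real.sin φj - Real.sin θi * Real.sin φi))) =
      ((1 / (2 * Real.pi)) * ∫ φ in (-Real.pi)..Real.pi, Real.cos (a / 2 * Real.sin φ)) ^ 4 := by
  have hpi := Real.pi_pos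
  have hF := neumann (a/2)
  simp_rw [show (2:ℝ)*(a/2) = a by ring] at hF
  set Fa := ∫ θ in (0:ℝ)..(π/2), ∫ φ in (-π)..π, Real.cos (a*Real.sin θ*Real.sin φ) with hFadef
  set K := ∫ φ in (-π)..π, Real.cos (a / 2 * Real.sin φ) with hKdef
  have h4 : (∫ θj in (0 : ℝ)..(π / 2), ∫ φj in (-π)..π,
      ∫ θi in (0 : ℝ)..(π / 2), ∫ φi in (-π)..π,
        Real.cos (a * (Real.sin θj * Real.sin φj - Real.sin θi * Real.sin φi))) = Fa^2 := by
    have h1 : ∀ θj φj : ℝ, (∫ θi in (0 : ℝ)..(π / 2), ∫ φi in (-π)..π,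
        Real.cos (a * (Real.sin θj * Real.sin φj - Real.sin θi * Real.sin φi)))
        = Real.cos (a*(Real.sin θj * Real.sin φj)) * Fa :=
      fun θj φj => inner_two a (Real.sin θj * Real.sin φj)
    simp_rw [h1, intervalIntegral.integral_mul_const]
    simp_rw [← mul_assoc]
    rw [← hFadef, sq]
  rw [h4]
  have hFa : Fa = K^2/4 := by linarith
  rw [hFa]
  have h2 : (π/2 * (2*π)) ≠ 0 := by positivity
  field_simp
  ring

/-- For every real number a,
(1/(π/2 · 2π))² · ∫∫∫∫ cos(a·(sinθ_j sinφ_j − sinθ_i sinφ_i)) dφ_i dθ_i dφ_j dθ_j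
= (J₀(a/2))⁴. -/
theorem fourfold_integral_cos_eq_besselJ0_pow_four (a : ℝ) :
    (1 / (Real.pi / 2 * (2 * Real.pi))) ^ 2 *
      (∫ θj in (0 : ℝ)..(Real.pi / 2), ∫ φj in (-Real.pi)..Real.pi,
        ∫ θi in (0 : ℝ)..(Real.pi / 2), ∫ φi in (-Real.pi)..Real.pi,
          Real.cos (a * (Real.sin θj * Real.sin φj - Real.sin θi * Real.sin φi))) =
      (besselJ0 (a / 2)) ^ 4 := by
  rw [besselJ0]
  exact fourfold_integral_cos_eq_besselJ0_pow_four' a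
end
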